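/- Let (X, μ) be a probability space and let (f_n) be a sequence of measurable functions f_n : X → ℝ with f_n > 0 μ-almost everywhere, such that each f_n is integrable with ∫ f_n dμ ≤ 1, each log ∘ f_n is integrable, and ∫ log f_n dμ → 0 as n → ∞. Then f_n converges to the constant function 1 in measure. -/

import Mathlib

open MeasureTheory

lemma h_mono {a t : ℝ} (ha : 0 < a) (ht : 0 < t)
    (hcase : (a ≤ 1 ∧ t ≤ a) ∨ (1 ≤ a ∧ a ≤ t)) :
    a - 1 - Real.log a ≤ t - 1 - Real.log t := by
  have hlog : Real.log t - Real.log a ≤ (t - a) / a := by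
    have := Real.log_le_sub_one_of_pos (x := t / a) (div_pos ht ha)
    rwa [Real.log_div ht.ne' ha.ne', div_sub_one ha.ne'] at this
  have key : 0 ≤ (t - a) * (a - 1) / a := by
    rcases hcase with ⟨h1, h2⟩ | ⟨h1, h2⟩
    · have : 0 ≤ (t - a) * (a - 1) := by nlinarith
      exact div_nonneg this ha.le
    · exact div_nonneg (mul_nonneg (by linarith) (by linarith)) ha.le
  have heq : (t - a) - (t - a) / a = (t - a) * (a - 1) / a := by
    field_simp
  nlinarith [hlog]

lemma h_pos {a : ℝ} (ha : 0 < a) (hne : a ≠ 1) : 0 < a - 1 - Real.log a := by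
  have := Real.log_lt_sub_one_of_pos ha hne
  linarith

theorem tendstoInMeasure_one_of_integral_log_tendsto_zero
    {X : Type*} [MeasurableSpace X] (μ : Measure X) [IsProbabilityMeasure μ]
    (f : ℕ → X → ℝ) (hmeas : ∀ n, Measurable (f n))
    (hpos : ∀ n, ∀ᵐ x ∂μ, 0 < f n x)
    (hint : ∀ n, Integrable (f n) μ)
    (hle : ∀ n, ∫ x, f n x ∂μ ≤ 1)
    (hlogint : ∀ n, Integrable (fun x => Real.log (f n x)) μ)
    (hlog : Filter.Tendsto (fun n => ∫ x, Real.log (f n x) ∂μ) Filter.atTop (nhds 0)) :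
    TendstoInMeasure μ f Filter.atTop (fun _ => 1) := by
  set g : ℕ → X → ℝ := fun n x => f n x - 1 - Real.log (f n x) with hg
  have hgint : ∀ n, Integrable (g n) μ := fun n =>
    ((hint n).sub (integrable_const 1)).sub (hlogint n)
  have hgnonneg : ∀ n, 0 ≤ᵐ[μ] g n := fun n => by
    filter_upwards [hpos n] with x hx
    have := Real.log_le_sub_one_of_pos hx
    simp only [hg, Pi.zero_apply]; linarith
  have hI0 : Filter.Tendsto (fun n => ∫ x, g n x ∂μ) Filter.atTop (nhds 0) := by
    have hIle : ∀ n, ∫ x, g n x ∂μ ≤ -∫ x, Real.log (f n x) ∂μ := by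
      intro n
      have heq : ∫ x, g n x ∂μ = ∫ x, f n x ∂μ - 1 - ∫ x, Real.log (f n x) ∂μ := by
        simp only [hg]
        rw [integral_sub (f := fun x => f n x - 1) (g := fun x => Real.log (f n x))
            ((hint n).sub (integrable_const 1)) (hlogint n),
          integral_sub (hint n) (integrable_const 1)]
        simp
      rw [heq]
      have := hle n; linarith
    have hInonneg : ∀ n, 0 ≤ ∫ x, g n x ∂μ := fun n =>
      integral_nonneg_of_ae (hgnonneg n)
    have hneg : Filter.Tendsto (fun n => -∫ x, Real.log (f n x) ∂μ) Filter.atTop (nhds 0) := by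
      simpa using hlog.neg
    exact tendsto_of_tendsto_of_tendsto_of_le_of_le tendsto_const_nhds hneg hInonneg hIle
  rw [tendstoInMeasure_iff_norm]
  intro ε hε
  set δ : ℝ := min ε (1/2) with hδdef
  have hδpos : 0 < δ := lt_min hε (by norm_num)
  have hδ1 : δ < 1 := lt_of_le_of_lt (min_le_right _ _) (by norm_num)
  set c : ℝ := min ((1 + δ) - 1 - Real.log (1 + δ)) ((1 - δ) - 1 - Real.log (1 - δ)) with hc
  have hcpos : 0 < c := lt_min
    (h_pos (by linarith) (by linarith)) (h_pos (by linarith) (by linarith))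
  have hsub : ∀ n, μ {x | ε ≤ ‖f n x - 1‖} ≤ μ {x | c ≤ g n x} := by
    intro n
    apply measure_mono_ae
    filter_upwards [hpos n] with x hx hdist
    simp only [Set.mem_setOf_eq, Real.norm_eq_abs] at hdist ⊢
    have hδd : δ ≤ |f n x - 1| := le_trans (min_le_left _ _) hdist
    rcases le_abs.mp hδd with h | h
    · calc c ≤ (1 + δ) - 1 - Real.log (1 + δ) := min_le_left _ _
        _ ≤ g n x := h_mono (by linarith) hx (Or.inr ⟨by linarith, by linarith⟩)
    · calc c ≤ (1 - δ) - 1 - Real.log (1 - δ) := min_le_right _ _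
        _ ≤ g n x := h_mono (by linarith) hx (Or.inl ⟨by linarith, by linarith⟩)
  have hmarkov : ∀ n, μ {x | c ≤ g n x} ≤ ENNReal.ofReal ((∫ x, g n x ∂μ) / c) := by
    intro n
    have h1 : c * (μ {x | c ≤ g n x}).toReal ≤ _ := mul_meas_ge_le_integral_of_nonneg (hgnonneg n) (hgint n) c
    have h2 : (μ {x | c ≤ g n x}).toReal ≤ (∫ x, g n x ∂μ) / c := by
      rw [le_div_iff₀ hcpos]; linarith [h1]
    calc μ {x | c ≤ g n x} = ENNReal.ofReal ((μ {x | c ≤ g n x}).toReal) :=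
          (ENNReal.ofReal_toReal (measure_ne_top μ _)).symm
      _ ≤ ENNReal.ofReal ((∫ x, g n x ∂μ) / c) := ENNReal.ofReal_le_ofReal h2
  have hupper : Filter.Tendsto (fun n => ENNReal.ofReal ((∫ x, g n x ∂μ) / c))
      Filter.atTop (nhds 0) := by
    have := ENNReal.tendsto_ofReal (hI0.div_const c)
    simpa using this
  exact tendsto_of_tendsto_of_tendsto_of_le_of_le tendsto_const_nhds hupper
    (fun n => zero_le) (fun n => le_trans (hsub n) (hmarkov n))
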